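/- Let G be a subgroup of the special unitary group SU(2) such that every element U of G whose underlying matrix is neither 1 nor −1 has trace 0. Then the cardinality of G is at most 8 (so its image in SU(2)/{±1} has order at most 4). -/

import Mathlib

open Matrix

private lemma sq_eq_neg_one' (X : Matrix (Fin 2) (Fin 2) ℂ) (hd : X.det = 1)
    (ht : X.trace = 0) : X * X = -1 := by
  rw [Matrix.det_fin_two] at hd
  rw [Matrix.trace_fin_two] at ht
  ext i j
  fin_cases i <;> fin_cases j <;>
    simp [Matrix.mul_apply, Fin.sum_univ_two, Matrix.neg_apply, Matrix.one_apply]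
  · linear_combination X 0 0 * ht - hd
  · linear_combination X 0 1 * ht
  · linear_combination X 1 0 * ht
  · linear_combination X 1 1 * ht - hd

private lemma anti' {M : Type*} [Ring M] (a b : M) (ha : a * a = -1) (hb : b * b = -1)
    (hab : (a * b) * (a * b) = -1) : b * a = -(a * b) := by
  have h1 : a * (b * a * b) = -1 := by
    calc a * (b * a * b) = (a * b) * (a * b) := by noncomm_ring
    _ = -1 := hab
  have h2 : b * a * b = a := by
    have := congrArg (fun z => a * z) h1
    calc b * a * b = -((a*a) * (b*a*b)) := by rw [ha]; noncomm_ring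
    _ = -(a * (a * (b*a*b))) := by noncomm_ring
    _ = -(a * (-1)) := by rw [h1]
    _ = a := by noncomm_ring
  calc b * a = -(b * a * (b * b)) := by rw [hb]; noncomm_ring
  _ = -((b * a * b) * b) := by noncomm_ring
  _ = -(a * b) := by rw [h2]

private lemma key' (S : Set (Matrix (Fin 2) (Fin 2) ℂ))
    (hmul : ∀ x ∈ S, ∀ y ∈ S, x * y ∈ S)
    (hd : ∀ x ∈ S, x.det = 1)
    (ht : ∀ x ∈ S, x ≠ 1 → x ≠ -1 → x.trace = 0) :
    ∃ t : Finset (Matrix (Fin 2) (Fin 2) ℂ), t.card ≤ 8 ∧ ∀ x ∈ S, x ∈ t := by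
  -- squares of non-±1 elements are -1
  have hsq : ∀ x ∈ S, x ≠ 1 → x ≠ -1 → x * x = -1 := fun x hx h1 h2 =>
    sq_eq_neg_one' x (hd x hx) (ht x hx h1 h2)
  by_cases hA : ∃ U ∈ S, U ≠ 1 ∧ U ≠ -1
  · obtain ⟨U, hUS, hU1, hU2⟩ := hA
    have hUU : U * U = -1 := hsq U hUS hU1 hU2
    by_cases hB : ∃ V ∈ S, V ≠ 1 ∧ V ≠ -1 ∧ V ≠ U ∧ V ≠ -U
    · obtain ⟨V, hVS, hV1, hV2, hV3, hV4⟩ := hB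
      have hVV : V * V = -1 := hsq V hVS hV1 hV2
      have hUVS : U * V ∈ S := hmul U hUS V hVS
      have hUV1 : U * V ≠ 1 := by
        intro h
        apply hV4
        have := congrArg (fun z => U * z) h
        simp only [← mul_assoc, hUU] at this
        calc V = -(-1 * V) := by noncomm_ring
        _ = -(U * 1) := by rw [this]; try noncomm_ring
        _ = -U := by rw [mul_one]
      have hUV2 : U * V ≠ -1 := by
        intro h
        apply hV3
        have := congrArg (fun z => U * z) h
        simp only [← mul_assoc, hUU] at this
        calc V = -(-1 * V) := by noncomm_ring
        _ = -(U * (-1)) := by rw [this]; try noncomm_ring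
        _ = U := by noncomm_ring
      have hUVUV : (U * V) * (U * V) = -1 := hsq _ hUVS hUV1 hUV2
      refine ⟨{1, -1, U, -U, V, -V, U * V, -(U * V)}, ?_, ?_⟩
      · refine (Finset.card_insert_le _ _).trans (Nat.add_le_add ?_ le_rfl)
        refine (Finset.card_insert_le _ _).trans (Nat.add_le_add ?_ le_rfl)
        refine (Finset.card_insert_le _ _).trans (Nat.add_le_add ?_ le_rfl)
        refine (Finset.card_insert_le _ _).trans (Nat.add_le_add ?_ le_rfl)
        refine (Finset.card_insert_le _ _).trans (Nat.add_le_add ?_ le_rfl)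
        refine (Finset.card_insert_le _ _).trans (Nat.add_le_add ?_ le_rfl)
        refine (Finset.card_insert_le _ _).trans (Nat.add_le_add ?_ le_rfl)
        simp
      · intro x hxS
        by_contra hx
        simp only [Finset.mem_insert, Finset.mem_singleton, not_or] at hx
        obtain ⟨hx1, hx2, hx3, hx4, hx5, hx6, hx7, hx8⟩ := hx
        have hxx : x * x = -1 := hsq x hxS hx1 hx2
        -- x * U
        have hxUS : x * U ∈ S := hmul x hxS U hUS
        have hxU1 : x * U ≠ 1 := by
          intro h
          apply hx4
          have := congrArg (fun z => z * U) h
          simp only [mul_assoc, hUU] at this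
          calc x = -(x * (-1)) := by noncomm_ring
          _ = -(1 * U) := by rw [this]; try noncomm_ring
          _ = -U := by rw [one_mul]
        have hxU2 : x * U ≠ -1 := by
          intro h
          apply hx3
          have := congrArg (fun z => z * U) h
          simp only [mul_assoc, hUU] at this
          calc x = -(x * (-1)) := by noncomm_ring
          _ = -((-1) * U) := by rw [this]
          _ = U := by noncomm_ring
        have hUx : U * x = -(x * U) := anti' x U hxx hUU (hsq _ hxUS hxU1 hxU2)
        -- x * V
        have hxVS : x * V ∈ S := hmul x hxS V hVS
        have hxV1 : x * V ≠ 1 := by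
          intro h
          apply hx6
          have := congrArg (fun z => z * V) h
          simp only [mul_assoc, hVV] at this
          calc x = -(x * (-1)) := by noncomm_ring
          _ = -(1 * V) := by rw [this]; try noncomm_ring
          _ = -V := by rw [one_mul]
        have hxV2 : x * V ≠ -1 := by
          intro h
          apply hx5
          have := congrArg (fun z => z * V) h
          simp only [mul_assoc, hVV] at this
          calc x = -(x * (-1)) := by noncomm_ring
          _ = -((-1) * V) := by rw [this]
          _ = V := by noncomm_ring
        have hVx : V * x = -(x * V) := anti' x V hxx hVV (hsq _ hxVS hxV1 hxV2)
        -- x * (U*V)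
        have hxWS : x * (U * V) ∈ S := hmul x hxS _ hUVS
        have hxW1 : x * (U * V) ≠ 1 := by
          intro h
          apply hx8
          have this2 : x * (U * V) * (U * V) = 1 * (U * V) := by rw [h]
          rw [mul_assoc x, hUVUV] at this2
          calc x = -(x * (-1)) := by noncomm_ring
          _ = -(1 * (U * V)) := by rw [this2]
          _ = -(U * V) := by rw [one_mul]
        have hxW2 : x * (U * V) ≠ -1 := by
          intro h
          apply hx7
          have this2 : x * (U * V) * (U * V) = (-1) * (U * V) := by rw [h]
          rw [mul_assoc x, hUVUV] at this2
          calc x = -(x * (-1)) := by noncomm_ring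
          _ = -((-1) * (U * V)) := by rw [this2]
          _ = U * V := by noncomm_ring
        have hWx : (U * V) * x = -(x * (U * V)) :=
          anti' x (U * V) hxx hUVUV (hsq _ hxWS hxW1 hxW2)
        -- contradiction
        have hcomm : (U * V) * x = x * (U * V) := by
          calc (U * V) * x = U * (V * x) := by rw [mul_assoc]
          _ = U * (-(x * V)) := by rw [hVx]
          _ = -((U * x) * V) := by noncomm_ring
          _ = -((-(x * U)) * V) := by rw [hUx]
          _ = x * (U * V) := by noncomm_ring
        have hzero : x * (U * V) = 0 := by
          have : x * (U * V) + x * (U * V) = 0 := by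
            nth_rewrite 1 [← hcomm]
            rw [hWx, neg_add_cancel]
          have h2 : (2 : ℂ) • (x * (U * V)) = 0 := by
            rw [two_smul]; exact this
          have := smul_eq_zero.mp h2
          rcases this with h | h
          · exact absurd h (by norm_num)
          · exact h
        have : (x * (U * V)).det = 1 := hd _ hxWS
        rw [hzero] at this
        simp [Matrix.det_zero] at this
    · push_neg at hB
      refine ⟨{1, -1, U, -U}, ?_, ?_⟩
      · refine (Finset.card_insert_le _ _).trans (Nat.add_le_add ?_ le_rfl)
        refine (Finset.card_insert_le _ _).trans (Nat.add_le_add ?_ le_rfl)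
        refine (Finset.card_insert_le _ _).trans (Nat.add_le_add ?_ le_rfl)
        simp
      · intro x hxS
        simp only [Finset.mem_insert, Finset.mem_singleton]
        by_cases h1 : x = 1
        · exact Or.inl h1
        by_cases h2 : x = -1
        · exact Or.inr (Or.inl h2)
        by_cases h3 : x = U
        · exact Or.inr (Or.inr (Or.inl h3))
        · exact Or.inr (Or.inr (Or.inr (hB x hxS h1 h2 h3)))
  · push_neg at hA
    refine ⟨{1, -1}, ?_, ?_⟩
    · refine (Finset.card_insert_le _ _).trans (Nat.add_le_add ?_ le_rfl)
      simp
    · intro x hxS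
      simp only [Finset.mem_insert, Finset.mem_singleton]
      by_cases h1 : x = 1
      · exact Or.inl h1
      · exact Or.inr (hA x hxS h1)

theorem su2_subgroup_traceless_card_le_eight
    (G : Subgroup (Matrix.unitaryGroup (Fin 2) ℂ))
    (hdet : ∀ U ∈ G, ((U : Matrix (Fin 2) (Fin 2) ℂ)).det = 1)
    (hG : ∀ U ∈ G, (U : Matrix (Fin 2) (Fin 2) ℂ) ≠ 1 →
      (U : Matrix (Fin 2) (Fin 2) ℂ) ≠ -1 →
      Matrix.trace (U : Matrix (Fin 2) (Fin 2) ℂ) = 0) :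
    Finite G ∧ Nat.card G ≤ 8 := by
  set S : Set (Matrix (Fin 2) (Fin 2) ℂ) :=
    {x | ∃ u : Matrix.unitaryGroup (Fin 2) ℂ, u ∈ G ∧ (u : Matrix (Fin 2) (Fin 2) ℂ) = x}
    with hSdef
  have hmul : ∀ x ∈ S, ∀ y ∈ S, x * y ∈ S := by
    rintro x ⟨u, hu, rfl⟩ y ⟨v, hv, rfl⟩
    exact ⟨u * v, G.mul_mem hu hv, rfl⟩
  have hd : ∀ x ∈ S, x.det = 1 := by
    rintro x ⟨u, hu, rfl⟩; exact hdet u hu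
  have htr : ∀ x ∈ S, x ≠ 1 → x ≠ -1 → x.trace = 0 := by
    rintro x ⟨u, hu, rfl⟩ h1 h2; exact hG u hu h1 h2
  obtain ⟨t, htcard, htmem⟩ := key' S hmul hd htr
  have hmem : ∀ g : G, ((g : Matrix.unitaryGroup (Fin 2) ℂ) : Matrix (Fin 2) (Fin 2) ℂ) ∈ t :=
    fun g => htmem _ ⟨g, g.2, rfl⟩
  let f : G → {x // x ∈ t} := fun g => ⟨_, hmem g⟩
  have hf : Function.Injective f := by
    intro a b hab
    replace hab : (f a).1 = (f b).1 := congrArg Subtype.val hab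
    ext1
    exact Subtype.ext hab
  have hfin : Finite G := Finite.of_injective f hf
  refine ⟨hfin, ?_⟩
  calc Nat.card G ≤ Nat.card {x // x ∈ t} := Nat.card_le_card_of_injective f hf
  _ = t.card := Nat.card_eq_finsetCard t
  _ ≤ 8 := htcard
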